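/- arXiv:1912.01467 — 3 statements merged into one kernel-verified Lean document; each statement's English description precedes it below -/
import Mathlib

section
/- Let f be convex and differentiable on 𝕊^n, let X* minimize f over S_n with δ := λ_{n-1}(∇f(X*)) − λ_n(∇f(X*)) > 0, and let v_n be the unit eigenvector of ∇f(X*) corresponding to λ_n(∇f(X*)). Then for every X ∈ S_n, ⟨X − X*, ∇f(X*)⟩ ≥ δ(1 − v_nᵀ X v_n). -/
open Matrix
open scoped RealInnerProductSpace

noncomputable section

/-- Trace (Frobenius) inner product on real square matrices. -/
def tinner {n : ℕ} (A B : Matrix (Fin n) (Fin n) ℝ) : ℝ := ∑ i, ∑ j, A i j * B i j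

/-- Squared Frobenius norm. -/
def frobSq {n : ℕ} (A : Matrix (Fin n) (Fin n) ℝ) : ℝ := ∑ i, ∑ j, (A i j)^2

/-- Frobenius norm. -/
def frobNorm {n : ℕ} (A : Matrix (Fin n) (Fin n) ℝ) : ℝ := Real.sqrt (frobSq A)

/-- The spectrahedron: positive semidefinite matrices with unit trace. -/
def Spectra (n : ℕ) : Set (Matrix (Fin n) (Fin n) ℝ) :=
  {X | X.PosSemidef ∧ X.trace = 1}

/-- Eigenvalues of a symmetric matrix sorted in non-decreasing order, so that
`sortedEigs hA 0` is the smallest eigenvalue (λ_n in the paper's non-increasing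
convention), `sortedEigs hA 1` is the second smallest (λ_{n-1}), and in general
`sortedEigs hA i = λ_{n-i}`. -/
def sortedEigs {n : ℕ} {A : Matrix (Fin n) (Fin n) ℝ} (hA : A.IsHermitian) : Fin n → ℝ :=
  hA.eigenvalues ∘ Tuple.sort hA.eigenvalues

/- ====================  auxiliary lemmas  ==================== -/

lemma aux_deriv_nonneg_of_min {g : ℝ → ℝ} {d : ℝ} (hg : HasDerivAt g d 0)
    (hmin : ∀ t ∈ Set.Icc (0:ℝ) 1, g 0 ≤ g t) : 0 ≤ d := by
  have h := hasDerivAt_iff_tendsto_slope.mp hg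
  have h2 : Filter.Tendsto (slope g 0) (nhdsWithin 0 (Set.Ioi 0)) (nhds d) :=
    h.mono_left (nhdsWithin_mono 0 (fun x hx => ne_of_gt hx))
  refine ge_of_tendsto h2 ?_
  filter_upwards [Ioc_mem_nhdsGT one_pos] with t ht
  have h0 : g 0 ≤ g t := hmin t ⟨le_of_lt ht.1, ht.2⟩
  rw [slope_def_field]
  have h1 := ht.1
  exact div_nonneg (by linarith) (by linarith)

lemma aux_parseval {m : ℕ} {A : Matrix (Fin m) (Fin m) ℝ} (hA : A.IsHermitian)
    (x y : Fin m → ℝ) :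
    ∑ i, (⇑(hA.eigenvectorBasis i) ⬝ᵥ x) * (⇑(hA.eigenvectorBasis i) ⬝ᵥ y)
      = x ⬝ᵥ y := by
  have h := hA.eigenvectorBasis.sum_inner_mul_inner (WithLp.toLp 2 x : EuclideanSpace ℝ (Fin m))
    (WithLp.toLp 2 y : EuclideanSpace ℝ (Fin m))
  simpa [PiLp.inner_apply, RCLike.inner_apply, dotProduct, mul_comm] using h

lemma aux_eigdot {m : ℕ} {A : Matrix (Fin m) (Fin m) ℝ} (hA : A.IsHermitian)
    (i : Fin m) (y : Fin m → ℝ) :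
    ⇑(hA.eigenvectorBasis i) ⬝ᵥ (A *ᵥ y)
      = hA.eigenvalues i * (⇑(hA.eigenvectorBasis i) ⬝ᵥ y) := by
  rw [dotProduct_mulVec, ← mulVec_transpose]
  have ht : Aᵀ = A := by
    have := hA; rwa [Matrix.IsHermitian, conjTranspose_eq_transpose_of_trivial] at this
  rw [ht, hA.mulVec_eigenvectorBasis, smul_dotProduct, smul_eq_mul]

lemma aux_tinner_comm {m : ℕ} (A B : Matrix (Fin m) (Fin m) ℝ) :
    tinner A B = tinner B A := by
  simp [tinner, mul_comm]

lemma aux_tinner_sub_left {m : ℕ} (A B C : Matrix (Fin m) (Fin m) ℝ) :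
    tinner (A - B) C = tinner A C - tinner B C := by
  simp [tinner, sub_mul, Finset.sum_sub_distrib]

lemma aux_tinner_sub_right {m : ℕ} (A B C : Matrix (Fin m) (Fin m) ℝ) :
    tinner A (B - C) = tinner A B - tinner A C := by
  simp [tinner, mul_sub, Finset.sum_sub_distrib]

lemma aux_triple_swap {m : ℕ} (f : Fin m → Fin m → Fin m → ℝ) :
    ∑ i, ∑ j, ∑ k, f i j k = ∑ k, ∑ i, ∑ j, f i j k := by
  have h1 : ∀ i, ∑ j, ∑ k, f i j k = ∑ k, ∑ j, f i j k := fun i => Finset.sum_comm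
  simp_rw [h1]
  exact Finset.sum_comm

lemma aux_psd_rep {m : ℕ} {X : Matrix (Fin m) (Fin m) ℝ} (hX : X.PosSemidef) :
    ∃ B : Matrix (Fin m) (Fin m) ℝ, ∀ i j, X i j = ∑ k, B k i * B k j := by
  obtain ⟨B, rfl⟩ : ∃ B : Matrix (Fin m) (Fin m) ℝ, X = Bᴴ * B := by
    open scoped MatrixOrder in exact CStarAlgebra.nonneg_iff_eq_star_mul_self.mp hX.nonneg
  exact ⟨B, fun i j => by simp [Matrix.mul_apply, Matrix.conjTranspose_apply]⟩

lemma aux_rep_tinner {m : ℕ} {X B : Matrix (Fin m) (Fin m) ℝ}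
    (hB : ∀ i j, X i j = ∑ k, B k i * B k j) (G : Matrix (Fin m) (Fin m) ℝ) :
    tinner X G = ∑ k, (B k) ⬝ᵥ (G *ᵥ (B k)) := by
  simp only [tinner, dotProduct, mulVec, Finset.mul_sum]
  simp_rw [hB, Finset.sum_mul]
  rw [aux_triple_swap]
  refine Finset.sum_congr rfl fun k _ => Finset.sum_congr rfl fun i _ =>
    Finset.sum_congr rfl fun j _ => by ring

lemma aux_rep_trace {m : ℕ} {X B : Matrix (Fin m) (Fin m) ℝ}
    (hB : ∀ i j, X i j = ∑ k, B k i * B k j) :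
    X.trace = ∑ k, (B k) ⬝ᵥ (B k) := by
  simp only [Matrix.trace, Matrix.diag, dotProduct]
  simp_rw [hB]
  exact Finset.sum_comm

lemma aux_psd_smul {m : ℕ} {A : Matrix (Fin m) (Fin m) ℝ} (hA : A.PosSemidef)
    {c : ℝ} (hc : 0 ≤ c) : (c • A).PosSemidef := by
  refine Matrix.PosSemidef.of_dotProduct_mulVec_nonneg ?_ ?_
  · show (c • A)ᴴ = c • A
    rw [Matrix.conjTranspose_smul, star_trivial, hA.1]
  · intro x
    rw [smul_mulVec, dotProduct_smul, smul_eq_mul]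
    exact mul_nonneg hc (hA.dotProduct_mulVec_nonneg x)

lemma aux_rep_quad {m : ℕ} {X B : Matrix (Fin m) (Fin m) ℝ}
    (hB : ∀ i j, X i j = ∑ k, B k i * B k j) (v : Fin m → ℝ) :
    v ⬝ᵥ (X *ᵥ v) = ∑ k, (v ⬝ᵥ (B k))^2 := by
  simp only [dotProduct, mulVec, Finset.mul_sum]
  simp_rw [hB, Finset.sum_mul, Finset.mul_sum]
  rw [aux_triple_swap]
  refine Finset.sum_congr rfl fun k _ => ?_
  rw [pow_two, Finset.sum_mul_sum]
  exact Finset.sum_congr rfl fun i _ => Finset.sum_congr rfl fun j _ => by ring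

/-- Under the eigen-gap assumption, with `v` the unit eigenvector of `∇f(X*)`
for the smallest eigenvalue, `⟨X − X*, ∇f(X*)⟩ ≥ δ(1 − vᵀXv)` for all `X ∈ S_n`. -/
theorem stmt2 {n : ℕ} (f : Matrix (Fin (n+2)) (Fin (n+2)) ℝ → ℝ)
    (Gf : Matrix (Fin (n+2)) (Fin (n+2)) ℝ → Matrix (Fin (n+2)) (Fin (n+2)) ℝ)
    (hconv : ConvexOn ℝ Set.univ f)
    (hdiff : ∀ X H, HasDerivAt (fun t : ℝ => f (X + t • H)) (tinner (Gf X) H) 0)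
    (Xs : Matrix (Fin (n+2)) (Fin (n+2)) ℝ) (hXs : Xs ∈ Spectra (n+2))
    (hopt : ∀ X ∈ Spectra (n+2), f Xs ≤ f X)
    (hG : (Gf Xs).IsHermitian)
    (δ : ℝ) (hδ : δ = sortedEigs hG 1 - sortedEigs hG 0) (hδpos : 0 < δ)
    (v : Fin (n+2) → ℝ) (hv : ∑ i, (v i)^2 = 1)
    (hev : (Gf Xs) *ᵥ v = sortedEigs hG 0 • v) :
    ∀ X ∈ Spectra (n+2), tinner (X - Xs) (Gf Xs) ≥ δ * (1 - v ⬝ᵥ (X *ᵥ v)) := by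
  intro X hX
  set G := Gf Xs with hGdef
  set μ := hG.eigenvalues with hμ
  set σ := Tuple.sort hG.eigenvalues with hσ
  set u : Fin (n+2) → (Fin (n+2) → ℝ) := fun i => ⇑(hG.eigenvectorBasis i) with hu
  set i₀ := σ 0 with hi₀
  set μ0 := sortedEigs hG 0 with hμ0
  set μ1 := sortedEigs hG 1 with hμ1
  -- basic eigenvalue facts
  have hμi₀ : μ i₀ = μ0 := rfl
  have hmono := Tuple.monotone_sort hG.eigenvalues
  have h_ge0 : ∀ i, μ0 ≤ μ i := by
    intro i
    have h : i = σ (σ.symm i) := (σ.apply_symm_apply i).symm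
    rw [h]
    exact hmono (Fin.zero_le _)
  have h_gap : ∀ i, i ≠ i₀ → μ1 ≤ μ i := by
    intro i hi
    have hrepr : i = σ (σ.symm i) := (σ.apply_symm_apply i).symm
    have hj : σ.symm i ≠ 0 := by
      intro h
      apply hi
      rw [hrepr, h, hi₀]
    have h1le : (1 : Fin (n+2)) ≤ σ.symm i := by
      rw [Fin.le_def]
      have h2 := Fin.pos_iff_ne_zero.mpr hj
      rw [Fin.lt_def] at h2
      simp only [Fin.val_zero] at h2; simp only [Fin.val_one]; omega
    rw [hrepr]
    exact hmono h1le
  -- eigen-coordinates of v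
  have hvdot : v ⬝ᵥ v = 1 := by
    rw [dotProduct]; simpa [pow_two] using hv
  have hveig : ∀ i, μ i * (u i ⬝ᵥ v) = μ0 * (u i ⬝ᵥ v) := by
    intro i
    rw [← aux_eigdot hG i v, hev, dotProduct_smul, smul_eq_mul]
  have hvcoord : ∀ i, i ≠ i₀ → u i ⬝ᵥ v = 0 := by
    intro i hi
    have h := hveig i
    have hlt : μ0 < μ i := lt_of_lt_of_le (by linarith) (h_gap i hi)
    by_contra hne
    have := mul_right_cancel₀ hne h
    linarith
  have hvnorm : (u i₀ ⬝ᵥ v)^2 = 1 := by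
    have h := aux_parseval hG v v
    rw [hvdot] at h
    rw [← h]
    rw [Finset.sum_eq_single i₀]
    · ring
    · intro i _ hi; rw [hvcoord i hi]; ring
    · intro h'; exact absurd (Finset.mem_univ i₀) h'
  have hvproj : ∀ x : Fin (n+2) → ℝ, (v ⬝ᵥ x)^2 = (u i₀ ⬝ᵥ x)^2 := by
    intro x
    have h := aux_parseval hG v x
    rw [Finset.sum_eq_single i₀ (fun i _ hi => by rw [hvcoord i hi]; ring)
      (fun h' => absurd (Finset.mem_univ i₀) h')] at h
    have h2 : (v ⬝ᵥ x)^2 = ((u i₀ ⬝ᵥ v) * (u i₀ ⬝ᵥ x))^2 := by rw [h]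
    rw [h2, mul_pow, hvnorm, one_mul]
  -- quadratic form expansion
  have hquadexp : ∀ x : Fin (n+2) → ℝ, x ⬝ᵥ (G *ᵥ x) = ∑ i, μ i * (u i ⬝ᵥ x)^2 := by
    intro x
    have h := aux_parseval hG x (G *ᵥ x)
    rw [← h]
    refine Finset.sum_congr rfl fun i _ => ?_
    rw [aux_eigdot hG i x]
    ring
  have hnormexp : ∀ x : Fin (n+2) → ℝ, x ⬝ᵥ x = ∑ i, (u i ⬝ᵥ x)^2 := by
    intro x
    have h := aux_parseval hG x x
    rw [← h]
    exact Finset.sum_congr rfl fun i _ => by ring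
  -- the two key quadratic inequalities
  have hquad0 : ∀ x : Fin (n+2) → ℝ, μ0 * (x ⬝ᵥ x) ≤ x ⬝ᵥ (G *ᵥ x) := by
    intro x
    rw [hquadexp x, hnormexp x, Finset.mul_sum]
    exact Finset.sum_le_sum fun i _ =>
      mul_le_mul_of_nonneg_right (h_ge0 i) (sq_nonneg _)
  have hquad : ∀ x : Fin (n+2) → ℝ,
      μ0 * (x ⬝ᵥ x) + δ * ((x ⬝ᵥ x) - (v ⬝ᵥ x)^2) ≤ x ⬝ᵥ (G *ᵥ x) := by
    intro x
    rw [hquadexp x, hnormexp x, hvproj x]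
    have key : ∀ i ∈ Finset.univ, μ0 * (u i ⬝ᵥ x)^2 + δ * (u i ⬝ᵥ x)^2 ≤
        μ i * (u i ⬝ᵥ x)^2 + (if i = i₀ then δ * (u i₀ ⬝ᵥ x)^2 else 0) := by
      intro i _
      by_cases hi : i = i₀
      · subst hi
        rw [if_pos rfl, hμi₀]
      · rw [if_neg hi]
        have h2 := h_gap i hi
        nlinarith [sq_nonneg (u i ⬝ᵥ x)]
    have hsum := Finset.sum_le_sum key
    rw [Finset.sum_add_distrib, Finset.sum_add_distrib] at hsum
    have hsplit : ∑ i, (if i = i₀ then δ * (u i₀ ⬝ᵥ x)^2 else 0) = δ * (u i₀ ⬝ᵥ x)^2 := by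
      rw [Finset.sum_ite_eq' Finset.univ i₀ (fun _ => δ * (u i₀ ⬝ᵥ x)^2)]
      exact if_pos (Finset.mem_univ i₀)
    rw [hsplit, ← Finset.mul_sum, ← Finset.mul_sum] at hsum
    linarith
  -- lower bound on tinner · G over the spectrahedron
  have hbound : ∀ Y ∈ Spectra (n+2), μ0 + δ * (1 - v ⬝ᵥ (Y *ᵥ v)) ≤ tinner Y G := by
    intro Y hY
    obtain ⟨B, hB⟩ := aux_psd_rep hY.1
    rw [aux_rep_tinner hB G]
    have htr : (1 : ℝ) = ∑ k, (B k) ⬝ᵥ (B k) := by rw [← hY.2, aux_rep_trace hB]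
    have hq : v ⬝ᵥ (Y *ᵥ v) = ∑ k, (v ⬝ᵥ (B k))^2 := aux_rep_quad hB v
    have hsum : ∑ k, (μ0 * ((B k) ⬝ᵥ (B k)) + δ * (((B k) ⬝ᵥ (B k)) - (v ⬝ᵥ (B k))^2))
        ≤ ∑ k, (B k) ⬝ᵥ (G *ᵥ (B k)) :=
      Finset.sum_le_sum fun k _ => hquad (B k)
    calc μ0 + δ * (1 - v ⬝ᵥ (Y *ᵥ v))
        = ∑ k, (μ0 * ((B k) ⬝ᵥ (B k)) + δ * (((B k) ⬝ᵥ (B k)) - (v ⬝ᵥ (B k))^2)) := by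
          rw [hq]
          simp only [Finset.sum_add_distrib, mul_sub, Finset.sum_sub_distrib,
            ← Finset.mul_sum, ← htr]
          ring
      _ ≤ _ := hsum
  have hlow : μ0 ≤ tinner Xs G := by
    obtain ⟨B, hB⟩ := aux_psd_rep hXs.1
    rw [aux_rep_tinner hB G]
    have htr : (1 : ℝ) = ∑ k, (B k) ⬝ᵥ (B k) := by rw [← hXs.2, aux_rep_trace hB]
    calc μ0 = μ0 * 1 := by ring
      _ = ∑ k, μ0 * ((B k) ⬝ᵥ (B k)) := by rw [htr, Finset.mul_sum]
      _ ≤ ∑ k, (B k) ⬝ᵥ (G *ᵥ (B k)) := Finset.sum_le_sum fun k _ => hquad0 (B k)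
  -- optimality: tinner Xs G ≤ μ0 using the feasible direction towards vvᵀ
  have hupp : tinner Xs G ≤ μ0 := by
    set Y := vecMulVec v v with hYdef
    have hYpsd : Y.PosSemidef := by
      refine Matrix.PosSemidef.of_dotProduct_mulVec_nonneg ?_ ?_
      · ext i j
        simp [hYdef, vecMulVec_apply, Matrix.conjTranspose_apply, mul_comm]
      · intro x
        have h : star x ⬝ᵥ (Y *ᵥ x) = (v ⬝ᵥ x)^2 := by
          simp only [hYdef, vecMulVec_apply, mulVec, dotProduct, star_trivial, Pi.star_apply]
          rw [pow_two, Finset.sum_mul_sum]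
          simp only [Finset.mul_sum]
          refine Finset.sum_congr rfl fun i _ => Finset.sum_congr rfl fun j _ => by ring
        rw [h]
        exact sq_nonneg _
    have hYtr : Y.trace = 1 := by
      simp only [hYdef, Matrix.trace, Matrix.diag, vecMulVec_apply]
      simpa [pow_two] using hv
    -- path stays in the spectrahedron
    have hpath : ∀ t ∈ Set.Icc (0:ℝ) 1, Xs + t • (Y - Xs) ∈ Spectra (n+2) := by
      intro t ht
      have heq : Xs + t • (Y - Xs) = (1 - t) • Xs + t • Y := by
        rw [smul_sub, sub_smul, one_smul]; abel
      rw [heq]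
      refine ⟨(aux_psd_smul hXs.1 (by linarith [ht.2])).add (aux_psd_smul hYpsd ht.1), ?_⟩
      rw [Matrix.trace_add, Matrix.trace_smul, Matrix.trace_smul, hXs.2, hYtr]
      simp
    have hg := hdiff Xs (Y - Xs)
    have hmin : ∀ t ∈ Set.Icc (0:ℝ) 1,
        (fun t : ℝ => f (Xs + t • (Y - Xs))) 0 ≤ (fun t : ℝ => f (Xs + t • (Y - Xs))) t := by
      intro t ht
      simp only
      have h0 : Xs + (0:ℝ) • (Y - Xs) = Xs := by simp
      rw [h0]
      exact hopt _ (hpath t ht)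
    have hd : 0 ≤ tinner G (Y - Xs) := aux_deriv_nonneg_of_min hg hmin
    rw [aux_tinner_sub_right] at hd
    have hGY : tinner G Y = μ0 := by
      have h1 : tinner G Y = v ⬝ᵥ (G *ᵥ v) := by
        simp only [tinner, hYdef, vecMulVec_apply, dotProduct, mulVec, Finset.mul_sum]
        refine Finset.sum_congr rfl fun i _ => Finset.sum_congr rfl fun j _ => by ring
      rw [h1, hev, dotProduct_smul, smul_eq_mul, hvdot, mul_one]
    have h2 : tinner G Xs ≤ μ0 := by linarith
    rwa [aux_tinner_comm G Xs] at h2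
  -- conclusion
  have h1 := hbound X hX
  have h2 : tinner Xs G = μ0 := le_antisymm hupp hlow
  rw [ge_iff_le, aux_tinner_sub_left, h2]
  linarith
end
end

section
/- Let f be convex, β-smooth on S_n with unique rank-one optimizer X* satisfying quadratic growth ‖X − X*‖_F² ≤ (2/δ)(f(X) − f*). Then for any X ∈ S_n and any η ∈ [0,1], letting v = argmin_{‖u‖=1} [⟨uuᵀ, ∇f(X)⟩ + (ηβ/2)‖uuᵀ − X‖_F²] and X⁺ = (1−η)X + η vvᵀ, it holds that f(X⁺) − f* ≤ (f(X) − f*)(1 − η + η²β/δ). -/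
open Matrix
open scoped RealInnerProductSpace

noncomputable section

private lemma tinner_comm' {n : ℕ} (A B : Matrix (Fin n) (Fin n) ℝ) : tinner A B = tinner B A := by
  simp [tinner, mul_comm]

private lemma tinner_sub' {n : ℕ} (A B C : Matrix (Fin n) (Fin n) ℝ) :
    tinner A (B - C) = tinner A B - tinner A C := by
  simp [tinner, Matrix.sub_apply, mul_sub, Finset.sum_sub_distrib]

private lemma tinner_smul' {n : ℕ} (c : ℝ) (A B : Matrix (Fin n) (Fin n) ℝ) :
    tinner A (c • B) = c * tinner A B := by
  simp [tinner, Matrix.smul_apply, Finset.mul_sum, mul_left_comm]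

private lemma frobSq_smul' {n : ℕ} (c : ℝ) (A : Matrix (Fin n) (Fin n) ℝ) :
    frobSq (c • A) = c^2 * frobSq A := by
  simp [frobSq, Matrix.smul_apply, mul_pow, Finset.mul_sum]

private lemma frobSq_sub_comm' {n : ℕ} (A B : Matrix (Fin n) (Fin n) ℝ) :
    frobSq (A - B) = frobSq (B - A) := by
  unfold frobSq
  apply Finset.sum_congr rfl; intro i _
  apply Finset.sum_congr rfl; intro j _
  simp only [Matrix.sub_apply]; ring

private lemma grad_le' {g : ℝ → ℝ} {d : ℝ} (hg : ConvexOn ℝ Set.univ g)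
    (hd : HasDerivAt g d 0) : d ≤ g 1 - g 0 := by
  have h := hasDerivAt_iff_tendsto_slope.mp hd
  have h2 : Filter.Tendsto (slope g 0) (nhdsWithin 0 (Set.Ioi 0)) (nhds d) :=
    h.mono_left (nhdsWithin_mono _ (fun x hx => ne_of_gt hx))
  refine le_of_tendsto h2 ?_
  filter_upwards [Ioo_mem_nhdsGT_of_mem (by norm_num : (0:ℝ) ∈ Set.Ico 0 1)] with t ht
  have hconv := hg.2 (Set.mem_univ (0:ℝ)) (Set.mem_univ (1:ℝ))
    (by linarith [ht.2] : (0:ℝ) ≤ 1 - t) (le_of_lt ht.1) (by ring)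
  simp only [smul_eq_mul, mul_zero, mul_one, zero_add] at hconv
  rw [slope_def_field]
  rw [sub_zero, div_le_iff₀ ht.1]
  nlinarith [hconv]

/-- One step of regularized Frank–Wolfe with any `η ∈ [0,1]`, under quadratic
growth with constant `δ` and a rank-one optimizer, satisfies
`f(X⁺) − f* ≤ (f(X) − f*)(1 − η + η²β/δ)`. -/
theorem stmt9 {n : ℕ} (f : Matrix (Fin n) (Fin n) ℝ → ℝ)
    (Gf : Matrix (Fin n) (Fin n) ℝ → Matrix (Fin n) (Fin n) ℝ)
    (β δ : ℝ) (hβ : 0 < β) (hδpos : 0 < δ)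
    (hconv : ConvexOn ℝ Set.univ f)
    (hdiff : ∀ X H, HasDerivAt (fun t : ℝ => f (X + t • H)) (tinner (Gf X) H) 0)
    (hsmooth : ∀ X Y, f Y ≤ f X + tinner (Gf X) (Y - X) + β / 2 * frobSq (Y - X))
    (Xs : Matrix (Fin n) (Fin n) ℝ) (hXs : Xs ∈ Spectra n)
    (hopt : ∀ X ∈ Spectra n, f Xs ≤ f X)
    (huniq : ∀ X ∈ Spectra n, f X = f Xs → X = Xs)
    (xs : Fin n → ℝ) (hxs : ∑ i, (xs i)^2 = 1) (hrank1 : Xs = vecMulVec xs xs)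
    (hQG : ∀ X ∈ Spectra n, frobSq (X - Xs) ≤ (2 / δ) * (f X - f Xs))
    (X : Matrix (Fin n) (Fin n) ℝ) (hX : X ∈ Spectra n)
    (η : ℝ) (hη0 : 0 ≤ η) (hη1 : η ≤ 1)
    (v : Fin n → ℝ) (hv : ∑ i, (v i)^2 = 1)
    (hvmin : ∀ u : Fin n → ℝ, (∑ i, (u i)^2 = 1) →
      tinner (vecMulVec v v) (Gf X) + η * β / 2 * frobSq (vecMulVec v v - X) ≤
      tinner (vecMulVec u u) (Gf X) + η * β / 2 * frobSq (vecMulVec u u - X)) :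
    f ((1 - η) • X + η • vecMulVec v v) - f Xs ≤ (f X - f Xs) * (1 - η + η^2 * β / δ) := by
  set V := vecMulVec v v with hVdef
  set Y := (1 - η) • X + η • V with hYdef
  have hY : Y - X = η • (V - X) := by
    rw [hYdef]; module
  have h1 := hsmooth X Y
  rw [hY, tinner_smul', frobSq_smul'] at h1
  have key2 := hvmin xs hxs
  rw [← hrank1] at key2
  have hgconv : ConvexOn ℝ Set.univ (fun t : ℝ => f (X + t • (Xs - X))) := by
    refine ⟨convex_univ, ?_⟩
    intro x _ y _ a b ha hb hab
    simp only [smul_eq_mul]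
    have hco : a • (X + x • (Xs - X)) + b • (X + y • (Xs - X))
        = (a + b) • X + (a * x + b * y) • (Xs - X) := by module
    rw [hab, one_smul] at hco
    calc f (X + (a * x + b * y) • (Xs - X))
        = f (a • (X + x • (Xs - X)) + b • (X + y • (Xs - X))) := by rw [hco]
      _ ≤ a * f (X + x • (Xs - X)) + b * f (X + y • (Xs - X)) :=
          hconv.2 (Set.mem_univ _) (Set.mem_univ _) ha hb hab
  have h3 : tinner (Gf X) (Xs - X) ≤ f Xs - f X := by
    have := grad_le' hgconv (hdiff X (Xs - X))
    simpa using this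
  have h4 : frobSq (Xs - X) ≤ 2 / δ * (f X - f Xs) := by
    rw [frobSq_sub_comm']; exact hQG X hX
  have e1 : tinner (Gf X) (V - X) = tinner V (Gf X) - tinner X (Gf X) := by
    rw [tinner_sub', tinner_comm' (Gf X) V, tinner_comm' (Gf X) X]
  have e2 : tinner (Gf X) (Xs - X) = tinner Xs (Gf X) - tinner X (Gf X) := by
    rw [tinner_sub', tinner_comm' (Gf X) Xs, tinner_comm' (Gf X) X]
  rw [e1] at h1
  rw [e2] at h3
  have m2 := mul_le_mul_of_nonneg_left key2 hη0
  have m3 := mul_le_mul_of_nonneg_left h3 hη0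
  have m4 := mul_le_mul_of_nonneg_left h4 (show (0:ℝ) ≤ η^2 * β / 2 by positivity)
  ring_nf at h1 m2 m3 m4 ⊢
  linarith [h1, m2, m3, m4]
end
end

section
/- In the setting f(X,y) = g(𝒜X + y) + ⟨C,X⟩ + ⟨c,y⟩, with g strongly convex and smooth, K convex compact, suppose the (constant-over-optima) partial gradient ∇_X f* satisfies λ_{n-1}(∇_X f*) − λ_n(∇_X f*) = δ > 0. Then the problem min_{(X,y)∈S_n×K} f(X,y) admits a unique optimal solution (X*, y*), and X* = x*x*ᵀ is rank-one. -/
open Matrix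
open scoped RealInnerProductSpace

noncomputable section

section Aux

variable {m : ℕ}

lemma tinner_add_left (A B C : Matrix (Fin m) (Fin m) ℝ) :
    tinner (A + B) C = tinner A C + tinner B C := by
  simp [tinner, add_mul, Finset.sum_add_distrib]

lemma tinner_add_right (A B C : Matrix (Fin m) (Fin m) ℝ) :
    tinner A (B + C) = tinner A B + tinner A C := by
  simp [tinner, mul_add, Finset.sum_add_distrib]

lemma tinner_sub_right (A B C : Matrix (Fin m) (Fin m) ℝ) :
    tinner A (B - C) = tinner A B - tinner A C := by
  simp [tinner, mul_sub, Finset.sum_sub_distrib]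

lemma tinner_smul_right (A : Matrix (Fin m) (Fin m) ℝ) (t : ℝ) (B : Matrix (Fin m) (Fin m) ℝ) :
    tinner A (t • B) = t * tinner A B := by
  simp [tinner, Finset.mul_sum, mul_left_comm]

lemma tinner_eq_trace (A B : Matrix (Fin m) (Fin m) ℝ) : tinner A B = (Aᵀ * B).trace := by
  simp only [tinner, Matrix.trace, Matrix.diag_apply, Matrix.mul_apply, Matrix.transpose_apply]
  rw [Finset.sum_comm]

/-- Convex combinations stay in the spectrahedron. -/
lemma spectra_combo {X Y : Matrix (Fin m) (Fin m) ℝ} (hX : X ∈ Spectra m) (hY : Y ∈ Spectra m)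
    {a b : ℝ} (ha : 0 ≤ a) (hb : 0 ≤ b) (hab : a + b = 1) :
    a • X + b • Y ∈ Spectra m := by
  refine ⟨⟨?_, ?_⟩, ?_⟩
  · show (a • X + b • Y)ᴴ = _
    have h1 : Xᵀ = X := by simpa using hX.1.1.eq
    have h2 : Yᵀ = Y := by simpa using hY.1.1.eq
    simp [conjTranspose_smul, h1, h2]
  · exact ((hX.1.smul ha).add (hY.1.smul hb)).2
  · simp [Matrix.trace_add, Matrix.trace_smul, hX.2, hY.2, smul_eq_mul, hab]

/-- diagonal entries of a real PSD matrix are nonnegative -/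
lemma psd_diag_nonneg {Y : Matrix (Fin m) (Fin m) ℝ} (hY : Y.PosSemidef) (i : Fin m) :
    0 ≤ Y i i := by
  exact hY.diag_nonneg

/-- a real PSD matrix with vanishing diagonal entry has vanishing column entries -/
lemma psd_offdiag_zero {Y : Matrix (Fin m) (Fin m) ℝ} (hY : Y.PosSemidef) {j : Fin m}
    (hjj : Y j j = 0) (i : Fin m) : Y i j = 0 := by
  obtain ⟨B, rfl⟩ : ∃ B : Matrix (Fin m) (Fin m) ℝ, Y = Bᴴ * B := by
    open MatrixOrder in
    obtain ⟨B, hB⟩ := CStarAlgebra.nonneg_iff_eq_star_mul_self.mp hY.nonneg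
    exact ⟨B, hB⟩
  have hcol : ∀ k, B k j = 0 := by
    have hdd : (Bᴴ * B) j j = ∑ k, B k j ^ 2 := by
      simp [Matrix.mul_apply, Matrix.conjTranspose_apply, sq]
    have h0 : ∑ k, B k j ^ 2 = 0 := by rw [← hdd, hjj]
    intro k
    have := (Finset.sum_eq_zero_iff_of_nonneg (fun k _ => sq_nonneg (B k j))).mp h0 k
      (Finset.mem_univ k)
    exact pow_eq_zero_iff (two_ne_zero) |>.mp this
  simp [Matrix.mul_apply, Matrix.conjTranspose_apply, hcol]

end Aux

section Spectral

variable {m : ℕ} {G : Matrix (Fin m) (Fin m) ℝ} (hG : G.IsHermitian)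

/-- The eigenvector column of the eigenvector unitary. -/
def eigCol (i0 : Fin m) : Fin m → ℝ :=
  fun j => (hG.eigenvectorUnitary : Matrix (Fin m) (Fin m) ℝ) j i0

lemma eigCol_norm (i0 : Fin m) : ∑ j, (eigCol hG i0 j)^2 = 1 := by
  have hU2 : (star (hG.eigenvectorUnitary : Matrix (Fin m) (Fin m) ℝ)) *
      (hG.eigenvectorUnitary : Matrix (Fin m) (Fin m) ℝ) = 1 :=
    Matrix.UnitaryGroup.star_mul_self _
  have := congrArg (fun M => M i0 i0) hU2
  simpa [Matrix.mul_apply, Matrix.star_apply, Matrix.one_apply, eigCol, sq] using this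

lemma eigCol_mulVec (i0 : Fin m) :
    G *ᵥ eigCol hG i0 = hG.eigenvalues i0 • eigCol hG i0 := by
  have h : (eigCol hG i0) = ⇑(hG.eigenvectorBasis i0) := by
    funext j; simp [eigCol]
  rw [h]
  exact hG.mulVec_eigenvectorBasis i0

lemma eigCol_mem_spectra (i0 : Fin m) : vecMulVec (eigCol hG i0) (eigCol hG i0) ∈ Spectra m := by
  set x := eigCol hG i0
  constructor
  · rw [Matrix.vecMulVec_eq (Fin 1)]
    have hr : (Matrix.replicateRow (Fin 1) x)ᴴ = Matrix.replicateCol (Fin 1) x := by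
      ext i j; simp [Matrix.conjTranspose_apply]
    rw [← hr]
    exact Matrix.posSemidef_conjTranspose_mul_self _
  · simp [Matrix.trace, Matrix.diag_apply, Matrix.vecMulVec_apply, ← sq, eigCol_norm hG i0]; exact eigCol_norm hG i0

lemma tinner_eigCol (i0 : Fin m) :
    tinner G (vecMulVec (eigCol hG i0) (eigCol hG i0)) = hG.eigenvalues i0 := by
  set x := eigCol hG i0 with hx
  have hmul := eigCol_mulVec hG i0
  have h1 : tinner G (vecMulVec x x) = ∑ i, x i * (G *ᵥ x) i := by
    simp only [tinner, Matrix.vecMulVec_apply, Matrix.mulVec, dotProduct]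
    congr 1; funext i
    rw [Finset.mul_sum]
    congr 1; funext j; ring
  rw [h1, hmul]
  simp only [Pi.smul_apply, smul_eq_mul]
  have h2 : ∑ i, x i * (hG.eigenvalues i0 * x i) = hG.eigenvalues i0 * ∑ i, x i ^ 2 := by
    rw [Finset.mul_sum]; congr 1; funext i; ring
  rw [h2, eigCol_norm hG i0, mul_one]

/-- Key spectral lemma: if `X` in the spectrahedron has `tinner G X ≤ λ_{i0}` where all other
eigenvalues are strictly larger, then `X` is the rank-one projector onto eigenvector `i0`. -/
lemma spectra_min_unique (i0 : Fin m)
    (hgap : ∀ j, j ≠ i0 → hG.eigenvalues i0 < hG.eigenvalues j)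
    {X : Matrix (Fin m) (Fin m) ℝ} (hX : X ∈ Spectra m)
    (hle : tinner G X ≤ hG.eigenvalues i0) :
    X = vecMulVec (eigCol hG i0) (eigCol hG i0) := by
  set U : Matrix (Fin m) (Fin m) ℝ := (hG.eigenvectorUnitary : Matrix (Fin m) (Fin m) ℝ) with hUdef
  have hU1 : U * star U = 1 := (Matrix.mem_unitaryGroup_iff).mp hG.eigenvectorUnitary.2
  have hU2 : star U * U = 1 := Matrix.UnitaryGroup.star_mul_self _
  set Y : Matrix (Fin m) (Fin m) ℝ := star U * X * U with hYdef
  have hYpsd : Y.PosSemidef := by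
    have := hX.1.conjTranspose_mul_mul_same U
    simpa [Matrix.star_eq_conjTranspose, hYdef] using this
  have hYtr : Y.trace = 1 := by
    rw [hYdef, Matrix.trace_mul_cycle, hU1, Matrix.one_mul, hX.2]
  set lam := hG.eigenvalues with hlam
  have hGsymm : Gᵀ = G := hG
  have hspec' : G = U * Matrix.diagonal lam * star U := by
    have hspec : G = U * Matrix.diagonal (RCLike.ofReal ∘ lam) * star U := hG.spectral_theorem
    have hdiag : Matrix.diagonal (RCLike.ofReal ∘ lam) = Matrix.diagonal lam := by congr 1
    rw [hspec, hdiag]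
  -- tinner G X = ∑ i, lam i * Y i i
  have hkey : tinner G X = ∑ i, lam i * Y i i := by
    rw [tinner_eq_trace, hGsymm]
    calc (G * X).trace = (U * (Matrix.diagonal lam * (star U * X))).trace := by
          rw [hspec']; congr 1; noncomm_ring
      _ = ((Matrix.diagonal lam * (star U * X)) * U).trace := Matrix.trace_mul_comm _ _
      _ = (Matrix.diagonal lam * Y).trace := by congr 1; rw [hYdef]; noncomm_ring
      _ = ∑ i, lam i * Y i i := by
          simp [Matrix.trace, Matrix.diag_apply, Matrix.diagonal_mul]
  have hdiagnn : ∀ i, 0 ≤ Y i i := psd_diag_nonneg hYpsd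
  have htrsum : ∑ i, Y i i = 1 := hYtr
  -- each off-min diagonal entry vanishes
  have hterm0 : ∀ i ∈ Finset.univ, (lam i - lam i0) * Y i i = 0 := by
    have hsum0 : ∑ i, (lam i - lam i0) * Y i i = (∑ i, lam i * Y i i) - lam i0 * ∑ i, Y i i := by
      rw [Finset.mul_sum, ← Finset.sum_sub_distrib]
      congr 1; funext i; ring
    have hnn : ∀ i ∈ Finset.univ, 0 ≤ (lam i - lam i0) * Y i i := by
      intro i _
      rcases eq_or_ne i i0 with h | h
      · simp [h]
      · exact mul_nonneg (by linarith [hgap i h]) (hdiagnn i)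
    have hle0 : ∑ i, (lam i - lam i0) * Y i i ≤ 0 := by
      rw [hsum0, htrsum, mul_one]
      linarith [hkey ▸ hle]
    have heq0 : ∑ i, (lam i - lam i0) * Y i i = 0 :=
      le_antisymm hle0 (Finset.sum_nonneg hnn)
    exact fun i hi => (Finset.sum_eq_zero_iff_of_nonneg hnn).mp heq0 i hi
  have hdiag0 : ∀ j, j ≠ i0 → Y j j = 0 := by
    intro j hj
    have := hterm0 j (Finset.mem_univ j)
    have hpos : 0 < lam j - lam i0 := by linarith [hgap j hj]
    exact (mul_eq_zero.mp this).resolve_left (by linarith)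
  have hY00 : Y i0 i0 = 1 := by
    have := Finset.sum_eq_single (M := ℝ) i0 (fun j _ hj => hdiag0 j hj)
      (fun h => absurd (Finset.mem_univ i0) h)
    rw [← htrsum, this]
  have hYsym : ∀ a b, Y a b = Y b a := by
    intro a b
    have := congrFun (congrFun hYpsd.1 a) b
    simpa [Matrix.conjTranspose_apply] using this.symm
  have hYeq : Y = Matrix.single i0 i0 1 := by
    ext i j
    rcases eq_or_ne j i0 with hj | hj
    · rw [hj]
      rcases eq_or_ne i i0 with hi | hi
      · rw [hi]; simp [Matrix.single_apply_same, hY00]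
      · have h0 : Y i0 i = 0 := psd_offdiag_zero hYpsd (hdiag0 i hi) i0
        rw [hYsym i i0, h0]
        simp [Matrix.single, hi.symm]
    · have h0 : Y i j = 0 := psd_offdiag_zero hYpsd (hdiag0 j hj) i
      rw [h0]
      simp [Matrix.single, hj.symm]
  have hXeq : X = U * Y * star U := by
    have h : U * (star U * X * U) * star U = X := by
      rw [show U * (star U * X * U) * star U = (U * star U) * X * (U * star U) by noncomm_ring,
        hU1, Matrix.one_mul, Matrix.mul_one]
    rw [hYdef, h]
  rw [hXeq, hYeq]
  ext i j
  simp only [Matrix.mul_apply, Matrix.single, Matrix.star_apply, star_trivial,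
    Matrix.vecMulVec_apply, Matrix.of_apply, eigCol]
  have hinner : ∀ k : Fin m, (∑ l, U i l * if i0 = l ∧ i0 = k then (1:ℝ) else 0)
      = if i0 = k then U i i0 else 0 := by
    intro k
    rcases eq_or_ne i0 k with h | h
    · simp [h, Finset.sum_ite_eq, mul_ite]
    · simp [h]
  rw [show (∑ k, (∑ l, U i l * if i0 = l ∧ i0 = k then (1:ℝ) else 0) * U j k)
      = ∑ k, (if i0 = k then U i i0 else 0) * U j k from
    Finset.sum_congr rfl fun k _ => by rw [hinner k]]
  simp only [ite_mul, zero_mul]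
  rw [Finset.sum_ite_eq]
  simp only [Finset.mem_univ, if_true]
  rfl

end Spectral

set_option maxHeartbeats 800000 in
/-- First-order optimality: the partial gradient satisfies the variational inequality
over the spectrahedron. -/
lemma first_order {m p : ℕ}
    (g : EuclideanSpace ℝ (Fin p) → ℝ) (Gg : EuclideanSpace ℝ (Fin p) → EuclideanSpace ℝ (Fin p))
    (βg : ℝ) (hβg : 0 < βg)
    (hsmooth : ∀ z z', g z' ≤ g z + ⟪Gg z, z' - z⟫ + βg / 2 * ‖z' - z‖^2)
    (A : Matrix (Fin m) (Fin m) ℝ →ₗ[ℝ] EuclideanSpace ℝ (Fin p))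
    (At : EuclideanSpace ℝ (Fin p) →ₗ[ℝ] Matrix (Fin m) (Fin m) ℝ)
    (hadj : ∀ z M, ⟪z, A M⟫ = tinner (At z) M)
    (C : Matrix (Fin m) (Fin m) ℝ)
    (X0 : Matrix (Fin m) (Fin m) ℝ) (y0 : EuclideanSpace ℝ (Fin p))
    (hX0 : X0 ∈ Spectra m)
    (hopt0 : ∀ X ∈ Spectra m, g (A X0 + y0) + tinner C X0 ≤ g (A X + y0) + tinner C X)
    (X : Matrix (Fin m) (Fin m) ℝ) (hX : X ∈ Spectra m) :
    0 ≤ tinner (At (Gg (A X0 + y0)) + C) (X - X0) := by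
  set z := A X0 + y0 with hz
  set D := X - X0 with hD
  set d := A D with hd
  set a := ⟪Gg z, d⟫ + tinner C D with ha
  set b := βg / 2 * ‖d‖^2 with hb
  have hb0 : 0 ≤ b := by positivity
  have key : ∀ t : ℝ, 0 < t → t ≤ 1 → 0 ≤ a + t * b := by
    intro t ht ht1
    have hXt : X0 + t • D ∈ Spectra m := by
      have hcombo : X0 + t • D = (1 - t) • X0 + t • X := by
        rw [hD]; module
      rw [hcombo]
      exact spectra_combo hX0 hX (by linarith) (le_of_lt ht) (by ring)
    have h1 := hopt0 _ hXt
    have hAXt : A (X0 + t • D) + y0 = z + t • d := by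
      have e : A (X0 + t • D) = A X0 + t • A D := by
        rw [map_add, LinearMap.map_smul]
      rw [e, hz, hd]; abel
    have h2 : g (A (X0 + t • D) + y0) ≤ g z + t * ⟪Gg z, d⟫ + t^2 * b := by
      rw [hAXt]
      have hs := hsmooth z (z + t • d)
      have e1 : z + t • d - z = t • d := by abel
      rw [e1] at hs
      have e2 : ⟪Gg z, t • d⟫ = t * ⟪Gg z, d⟫ := real_inner_smul_right _ _ _
      have e3 : ‖t • d‖^2 = t^2 * ‖d‖^2 := by
        rw [norm_smul]; simp [mul_pow, sq_abs]
      rw [e2, e3] at hs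
      rw [hb]; nlinarith [hs]
    have h3 : tinner C (X0 + t • D) = tinner C X0 + t * tinner C D := by
      rw [tinner_add_right, tinner_smul_right]
    have h4 : 0 ≤ t * (⟪Gg z, d⟫ + tinner C D) + t^2 * b := by
      have := h1.trans (by linarith [h2, h3.le] : g (A (X0 + t • D) + y0) + tinner C (X0 + t • D)
        ≤ g z + tinner C X0 + t * (⟪Gg z, d⟫ + tinner C D) + t^2 * b)
      linarith
    nlinarith [h4, ht]
  by_contra hcon
  push_neg at hcon
  have hacon : a < 0 := by
    rw [ha, hd, hadj (Gg z) D, ← tinner_add_left, hD]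
    exact hcon
  set t := min 1 ((-a) / (2 * (b + 1))) with htdef
  have ht : 0 < t := lt_min one_pos (div_pos (by linarith) (by positivity))
  have ht1 : t ≤ 1 := min_le_left _ _
  have h := key t ht ht1
  have ht2 : t ≤ (-a) / (2 * (b + 1)) := min_le_right _ _
  have h5 : t * b ≤ ((-a) / (2 * (b + 1))) * b := mul_le_mul_of_nonneg_right ht2 hb0
  have hfrac : ((-a) / (2 * (b + 1))) * b < -a := by
    rw [div_mul_eq_mul_div, div_lt_iff₀ (by positivity)]
    nlinarith
  linarith

set_option maxHeartbeats 1000000 in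
/-- In the setting `f(X,y) = g(𝒜X + y) + ⟨C,X⟩ + ⟨c,y⟩` with `g` strongly
convex and smooth and `K` convex compact, if the partial gradient `∇_X f* = 𝒜ᵀ∇g(𝒜X*+y*)+C`
at an optimum `(Xs, ys)` has a positive gap between its two smallest eigenvalues, then the
optimal solution is unique and `Xs = x xᵀ` is rank-one for a unit vector `x`. -/
theorem stmt12 {n p : ℕ}
    (g : EuclideanSpace ℝ (Fin p) → ℝ) (Gg : EuclideanSpace ℝ (Fin p) → EuclideanSpace ℝ (Fin p))
    (αg βg : ℝ) (hαg : 0 < αg) (hβg : 0 < βg)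
    (hsconv : ∀ z z', g z + ⟪Gg z, z' - z⟫ + αg / 2 * ‖z' - z‖^2 ≤ g z')
    (hsmooth : ∀ z z', g z' ≤ g z + ⟪Gg z, z' - z⟫ + βg / 2 * ‖z' - z‖^2)
    (A : Matrix (Fin (n+2)) (Fin (n+2)) ℝ →ₗ[ℝ] EuclideanSpace ℝ (Fin p))
    (At : EuclideanSpace ℝ (Fin p) →ₗ[ℝ] Matrix (Fin (n+2)) (Fin (n+2)) ℝ)
    (hadj : ∀ z M, ⟪z, A M⟫ = tinner (At z) M)
    (K : Set (EuclideanSpace ℝ (Fin p))) (hK : Convex ℝ K) (hKcpt : IsCompact K)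
    (C : Matrix (Fin (n+2)) (Fin (n+2)) ℝ) (c : EuclideanSpace ℝ (Fin p))
    (f : Matrix (Fin (n+2)) (Fin (n+2)) ℝ → EuclideanSpace ℝ (Fin p) → ℝ)
    (hf : ∀ X y, f X y = g (A X + y) + tinner C X + ⟪c, y⟫)
    (Xs : Matrix (Fin (n+2)) (Fin (n+2)) ℝ) (ys : EuclideanSpace ℝ (Fin p))
    (hfeas : Xs ∈ Spectra (n+2) ∧ ys ∈ K)
    (hopt : ∀ X ∈ Spectra (n+2), ∀ y ∈ K, f Xs ys ≤ f X y)
    (hG : (At (Gg (A Xs + ys)) + C).IsHermitian)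
    (δ : ℝ) (hδ : δ = sortedEigs hG 1 - sortedEigs hG 0) (hδpos : 0 < δ) :
    (∀ X ∈ Spectra (n+2), ∀ y ∈ K, f X y = f Xs ys → X = Xs ∧ y = ys) ∧
    ∃ x : Fin (n+2) → ℝ, (∑ i, (x i)^2 = 1) ∧ Xs = vecMulVec x x := by
  classical
  obtain ⟨hXs, hys⟩ := hfeas
  set σ : Equiv.Perm (Fin (n+2)) := Tuple.sort hG.eigenvalues with hσ
  set i0 : Fin (n+2) := σ 0 with hi0
  -- eigenvalue gap
  have hgap : ∀ j, j ≠ i0 → hG.eigenvalues i0 < hG.eigenvalues j := by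
    intro j hj
    set k : Fin (n+2) := σ.symm j with hk
    have hjk : j = σ k := by rw [hk]; simp
    have hkne : k ≠ 0 := by
      intro h
      apply hj
      rw [hjk, h, hi0]
    have hk1 : (1 : Fin (n+2)) ≤ k := by
      rw [Fin.le_def]
      have : (0 : ℕ) < k.val := by
        rcases Nat.eq_zero_or_pos k.val with h | h
        · exact absurd (Fin.ext h) hkne
        · exact h
      rw [Fin.val_one]; exact this
    have hmono := Tuple.monotone_sort hG.eigenvalues hk1
    have h0 : hG.eigenvalues i0 = sortedEigs hG 0 := rfl
    have h1 : sortedEigs hG 1 ≤ hG.eigenvalues j := by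
      rw [hjk]; exact hmono
    rw [h0]
    have : sortedEigs hG 0 = sortedEigs hG 1 - δ := by rw [hδ]; ring
    rw [this]
    linarith
  set x := eigCol hG i0 with hx
  -- first order condition at (Xs, ys)
  have hoptXs : ∀ X ∈ Spectra (n+2),
      g (A Xs + ys) + tinner C Xs ≤ g (A X + ys) + tinner C X := by
    intro X hXmem
    have := hopt X hXmem ys hys
    rw [hf, hf] at this
    linarith
  have hfo := first_order g Gg βg hβg hsmooth A At hadj C Xs ys hXs hoptXs
  have hXsle : tinner (At (Gg (A Xs + ys)) + C) Xs ≤ hG.eigenvalues i0 := by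
    have h1 := hfo (vecMulVec x x) (eigCol_mem_spectra hG i0)
    rw [tinner_sub_right] at h1
    have h2 : tinner (At (Gg (A Xs + ys)) + C) (vecMulVec x x) = hG.eigenvalues i0 :=
      tinner_eigCol hG i0
    linarith
  have hXs_eq : Xs = vecMulVec x x := spectra_min_unique hG i0 hgap hXs hXsle
  -- midpoint argument: any optimal point has the same A X + y
  have hmid : ∀ X' ∈ Spectra (n+2), ∀ y' ∈ K, f X' y' = f Xs ys → A X' + y' = A Xs + ys := by
    intro X' hX' y' hy' hval
    set z : EuclideanSpace ℝ (Fin p) := A Xs + ys with hzdef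
    set z' : EuclideanSpace ℝ (Fin p) := A X' + y' with hz'def
    set Xm := (1/2 : ℝ) • Xs + (1/2 : ℝ) • X' with hXm
    set ym := (1/2 : ℝ) • ys + (1/2 : ℝ) • y' with hym
    have hXmS : Xm ∈ Spectra (n+2) := spectra_combo hXs hX' (by norm_num) (by norm_num) (by norm_num)
    have hymK : ym ∈ K := hK hys hy' (by norm_num) (by norm_num) (by norm_num)
    set mz : EuclideanSpace ℝ (Fin p) := (1/2 : ℝ) • z + (1/2 : ℝ) • z' with hmz
    have hAm : A Xm + ym = mz := by
      have e : A Xm = (1/2 : ℝ) • A Xs + (1/2 : ℝ) • A X' := by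
        rw [hXm, map_add, LinearMap.map_smul, LinearMap.map_smul]
      rw [e, hym, hmz, hzdef, hz'def]
      module
    have h1 := hsconv mz z
    have h2 := hsconv mz z'
    have einner : ⟪Gg mz, z - mz⟫ + ⟪Gg mz, z' - mz⟫ = 0 := by
      rw [← inner_add_right]
      have : (z - mz) + (z' - mz) = 0 := by rw [hmz]; module
      rw [this, inner_zero_right]
    have en1 : ‖z - mz‖^2 = (1/4 : ℝ) * ‖z' - z‖^2 := by
      have e : z - mz = (-(1/2) : ℝ) • (z' - z) := by rw [hmz]; module
      rw [e, norm_smul, Real.norm_eq_abs, mul_pow, abs_neg,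
        abs_of_pos (by norm_num : (0:ℝ) < 1/2)]
      ring
    have en2 : ‖z' - mz‖^2 = (1/4 : ℝ) * ‖z' - z‖^2 := by
      have e : z' - mz = ((1/2) : ℝ) • (z' - z) := by rw [hmz]; module
      rw [e, norm_smul, Real.norm_eq_abs, mul_pow,
        abs_of_pos (by norm_num : (0:ℝ) < 1/2)]
      ring
    have hQ : (0 : ℝ) ≤ ‖z' - z‖^2 := sq_nonneg _
    have hfm : f Xm ym = g mz + (1/2 * tinner C Xs + 1/2 * tinner C X')
        + (1/2 * ⟪c, ys⟫ + 1/2 * ⟪c, y'⟫) := by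
      rw [hf, hAm]
      congr 1
      · congr 1
        rw [hXm, tinner_add_right, tinner_smul_right, tinner_smul_right]
      · rw [hym, inner_add_right, real_inner_smul_right, real_inner_smul_right]
    have hfs : f Xs ys = g z + tinner C Xs + ⟪c, ys⟫ := by rw [hf]
    have hf' : f X' y' = g z' + tinner C X' + ⟪c, y'⟫ := by rw [hf]
    have hoptm := hopt Xm hXmS ym hymK
    -- combine: αg/2 * ‖z-mz‖² + αg/2 * ‖z'-mz‖² ≤ 0
    have hcomb : αg / 2 * ‖z - mz‖^2 + αg / 2 * ‖z' - mz‖^2 ≤ 0 := by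
      linarith
    rw [en1, en2] at hcomb
    have hQ0 : ‖z' - z‖^2 ≤ 0 := by nlinarith
    have : ‖z' - z‖ = 0 := by nlinarith [norm_nonneg (z' - z)]
    have h0 : z' - z = 0 := norm_eq_zero.mp this
    rw [hz'def, hzdef] at h0
    have := sub_eq_zero.mp h0
    exact this
  constructor
  · intro X' hX' y' hy' hval
    have hz' : A X' + y' = A Xs + ys := hmid X' hX' y' hy' hval
    have hoptX' : ∀ X ∈ Spectra (n+2),
        g (A X' + y') + tinner C X' ≤ g (A X + y') + tinner C X := by
      intro X hXmem
      have h1 : f X' y' ≤ f X y' := hval ▸ hopt X hXmem y' hy'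
      rw [hf, hf] at h1
      linarith
    have hfo' := first_order g Gg βg hβg hsmooth A At hadj C X' y' hX' hoptX'
    have hX'le : tinner (At (Gg (A Xs + ys)) + C) X' ≤ hG.eigenvalues i0 := by
      have h1 := hfo' (vecMulVec x x) (eigCol_mem_spectra hG i0)
      rw [hz'] at h1
      rw [tinner_sub_right] at h1
      have h2 : tinner (At (Gg (A Xs + ys)) + C) (vecMulVec x x) = hG.eigenvalues i0 :=
        tinner_eigCol hG i0
      linarith
    have hX'eq : X' = vecMulVec x x := spectra_min_unique hG i0 hgap hX' hX'le
    have hXX : X' = Xs := by rw [hX'eq, hXs_eq]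
    refine ⟨hXX, ?_⟩
    rw [hXX] at hz'
    exact add_left_cancel hz'
  · exact ⟨x, eigCol_norm hG i0, hXs_eq⟩
end
end
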